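/- Let A be a real N×d matrix with AᵀA positive definite, with largest eigenvalue λ₁ and smallest eigenvalue λ_d > 0, K* = (AᵀA)⁻¹, b ∈ ℝ^N, and x* the minimizer of x ↦ ½‖Ax−b‖². Let (Ω, 𝔽, ℙ) be a probability space and w_b : Ω → ℝ^N a random vector with 𝔼‖w_b‖ ≤ ηm for some constant ηm < ∞. Let 0 < δ ≤ 1, ρ ∈ [0,1), and suppose the random sequence {x(t)} and deterministic matrices {K(t)} satisfy x(t+1) = x(t) − δK(t+1)Aᵀ(Ax(t) − b − w_b) and ‖K(t) − K*‖ ≤ ρᵗ‖K(0) − K*‖_F for all t. Then, with z(t) = x(t) − x*, for all t ≥ 0: 𝔼‖z(t+1)‖ ≤ (1 − δ + δλ₁‖K(0) − K*‖_F ρ^{t+1}) 𝔼‖z(t)‖ + δ ηm √λ₁ ‖K(0) − K*‖_F ρ^{t+1} + δ ηm √(1/λ_d). -/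

import Mathlib

open Matrix Filter Finset MeasureTheory ProbabilityTheory

/-- The spectral norm (operator 2-norm) of a real rectangular matrix, i.e. the operator
norm of the induced linear map between Euclidean spaces. -/
noncomputable def specNorm {m n : ℕ} (M : Matrix (Fin m) (Fin n) ℝ) : ℝ :=
  ‖LinearMap.toContinuousLinearMap (Matrix.toEuclideanLin M)‖

/-- Matrix-vector multiplication, viewed as a map between Euclidean spaces. -/
noncomputable def mulVecE {m n : ℕ} (M : Matrix (Fin m) (Fin n) ℝ)
    (v : EuclideanSpace ℝ (Fin n)) : EuclideanSpace ℝ (Fin m) :=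
  Matrix.toEuclideanLin M v

/-- The `j`-th column of a matrix, as an element of Euclidean space. -/
noncomputable def colE {m n : ℕ} (M : Matrix (Fin m) (Fin n) ℝ) (j : Fin n) :
    EuclideanSpace ℝ (Fin m) := WithLp.toLp 2 (fun i => M i j)

/-- The Frobenius norm of a matrix: square root of the sum of the squared Euclidean
norms of its columns. -/
noncomputable def frobNorm {m n : ℕ} (M : Matrix (Fin m) (Fin n) ℝ) : ℝ :=
  Real.sqrt (∑ j, ‖colE M j‖ ^ 2)

/-- The l¹-norm of a vector. -/
noncomputable def l1Norm {n : ℕ} (v : EuclideanSpace ℝ (Fin n)) : ℝ := ∑ i, |v i|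

section Aux
open scoped RealInnerProductSpace

lemma mulVecE_mul {m n p : ℕ} (M : Matrix (Fin m) (Fin n) ℝ) (N : Matrix (Fin n) (Fin p) ℝ)
    (v : EuclideanSpace ℝ (Fin p)) : mulVecE (M * N) v = mulVecE M (mulVecE N v) := by
  simp [mulVecE, Matrix.toEuclideanLin_apply, Matrix.mulVec_mulVec]

lemma inner_mulVecE {m n : ℕ} (M : Matrix (Fin m) (Fin n) ℝ) (v : EuclideanSpace ℝ (Fin n))
    (w : EuclideanSpace ℝ (Fin m)) : ⟪mulVecE M v, w⟫ = ⟪v, mulVecE Mᵀ w⟫ := by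
  have h : Mᵀ = Mᴴ := by ext i j; simp [Matrix.conjTranspose_apply]
  rw [h, mulVecE, mulVecE, Matrix.toEuclideanLin_conjTranspose_eq_adjoint,
    LinearMap.adjoint_inner_right]

lemma mulVecE_add {m n : ℕ} (M : Matrix (Fin m) (Fin n) ℝ) (u v : EuclideanSpace ℝ (Fin n)) :
    mulVecE M (u + v) = mulVecE M u + mulVecE M v := map_add _ _ _

lemma mulVecE_sub {m n : ℕ} (M : Matrix (Fin m) (Fin n) ℝ) (u v : EuclideanSpace ℝ (Fin n)) :
    mulVecE M (u - v) = mulVecE M u - mulVecE M v := map_sub _ _ _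

lemma mulVecE_smul {m n : ℕ} (M : Matrix (Fin m) (Fin n) ℝ) (c : ℝ)
    (v : EuclideanSpace ℝ (Fin n)) : mulVecE M (c • v) = c • mulVecE M v := map_smul _ _ _

lemma mulVecE_matsub {m n : ℕ} (M P : Matrix (Fin m) (Fin n) ℝ) (v : EuclideanSpace ℝ (Fin n)) :
    mulVecE (M - P) v = mulVecE M v - mulVecE P v := by
  unfold mulVecE; rw [map_sub]; rfl

lemma mulVecE_matadd {m n : ℕ} (M P : Matrix (Fin m) (Fin n) ℝ) (v : EuclideanSpace ℝ (Fin n)) :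
    mulVecE (M + P) v = mulVecE M v + mulVecE P v := by
  unfold mulVecE; rw [map_add]; rfl

lemma mulVecE_one {n : ℕ} (v : EuclideanSpace ℝ (Fin n)) :
    mulVecE (1 : Matrix (Fin n) (Fin n) ℝ) v = v := by
  ext i; simp [mulVecE, Matrix.toEuclideanLin_apply]

lemma mulVecE_le_specNorm {m n : ℕ} (M : Matrix (Fin m) (Fin n) ℝ)
    (v : EuclideanSpace ℝ (Fin n)) : ‖mulVecE M v‖ ≤ specNorm M * ‖v‖ :=
  (LinearMap.toContinuousLinearMap (Matrix.toEuclideanLin M)).le_opNorm v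

lemma toEuclideanLin_eigen {d : ℕ} {M : Matrix (Fin d) (Fin d) ℝ} (hM : M.IsHermitian)
    (j : Fin d) :
    Matrix.toEuclideanLin M (hM.eigenvectorBasis j) = hM.eigenvalues j • hM.eigenvectorBasis j := by
  have h := hM.mulVec_eigenvectorBasis j
  ext i
  have := congrFun h i
  simpa [Matrix.toEuclideanLin_apply] using this

lemma quadform_expand {d : ℕ} {M : Matrix (Fin d) (Fin d) ℝ} (hM : M.IsHermitian)
    (v : EuclideanSpace ℝ (Fin d)) :
    ⟪v, mulVecE M v⟫ = ∑ i, hM.eigenvalues i * (⟪hM.eigenvectorBasis i, v⟫ ^ 2) := by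
  have hsym : (Matrix.toEuclideanLin M).IsSymmetric := Matrix.isHermitian_iff_isSymmetric.mp hM
  set B := hM.eigenvectorBasis
  rw [show (mulVecE M v) = Matrix.toEuclideanLin M v from rfl,
    ← B.sum_inner_mul_inner v (Matrix.toEuclideanLin M v)]
  refine Finset.sum_congr rfl fun i _ => ?_
  rw [show ⟪B i, Matrix.toEuclideanLin M v⟫ = ⟪Matrix.toEuclideanLin M (B i), v⟫ from
    (hsym (B i) v).symm, toEuclideanLin_eigen hM i, real_inner_smul_left]
  have : ⟪v, B i⟫ = ⟪B i, v⟫ := real_inner_comm _ _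
  rw [this]; ring

lemma quadform_sumsq {d : ℕ} {M : Matrix (Fin d) (Fin d) ℝ} (hM : M.IsHermitian)
    (v : EuclideanSpace ℝ (Fin d)) :
    ∑ i, (⟪hM.eigenvectorBasis i, v⟫ ^ 2) = ‖v‖ ^ 2 := by
  have := (hM.eigenvectorBasis).sum_inner_mul_inner v v
  rw [real_inner_self_eq_norm_sq] at this
  rw [← this]
  refine Finset.sum_congr rfl fun i _ => ?_
  rw [real_inner_comm v]; ring

section Spec
variable {N d : ℕ} {A : Matrix (Fin N) (Fin d) ℝ} (hPD : (Aᵀ * A).PosDef)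
  {lam1 lamd : ℝ}
  (hlam1 : IsGreatest (Set.range hPD.isHermitian.eigenvalues) lam1)
  (hlamd : IsLeast (Set.range hPD.isHermitian.eigenvalues) lamd)

include hlam1 in
lemma lam1_pos : 0 < lam1 := by
  obtain ⟨i, hi⟩ := hlam1.1
  exact hi ▸ hPD.eigenvalues_pos i

include hlam1 in
lemma quad_ub (v : EuclideanSpace ℝ (Fin d)) :
    ⟪v, mulVecE (Aᵀ * A) v⟫ ≤ lam1 * ‖v‖ ^ 2 := by
  rw [quadform_expand hPD.isHermitian v, ← quadform_sumsq hPD.isHermitian v, Finset.mul_sum]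
  exact Finset.sum_le_sum fun i _ =>
    mul_le_mul_of_nonneg_right (hlam1.2 ⟨i, rfl⟩) (sq_nonneg _)

include hlamd in
lemma quad_lb (v : EuclideanSpace ℝ (Fin d)) :
    lamd * ‖v‖ ^ 2 ≤ ⟪v, mulVecE (Aᵀ * A) v⟫ := by
  rw [quadform_expand hPD.isHermitian v, ← quadform_sumsq hPD.isHermitian v, Finset.mul_sum]
  exact Finset.sum_le_sum fun i _ =>
    mul_le_mul_of_nonneg_right (hlamd.2 ⟨i, rfl⟩) (sq_nonneg _)

include hlam1 in
lemma normA_le (v : EuclideanSpace ℝ (Fin d)) :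
    ‖mulVecE A v‖ ≤ Real.sqrt lam1 * ‖v‖ := by
  have h1 : ‖mulVecE A v‖ ^ 2 ≤ (Real.sqrt lam1 * ‖v‖) ^ 2 := by
    rw [← real_inner_self_eq_norm_sq, inner_mulVecE, ← mulVecE_mul, mul_pow,
      Real.sq_sqrt (lam1_pos hPD hlam1).le]
    exact quad_ub hPD hlam1 v
  nlinarith [h1, norm_nonneg (mulVecE A v), mul_nonneg (Real.sqrt_nonneg lam1) (norm_nonneg v)]

include hlam1 in
lemma normAT_le (w : EuclideanSpace ℝ (Fin N)) :
    ‖mulVecE Aᵀ w‖ ≤ Real.sqrt lam1 * ‖w‖ := by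
  set v := mulVecE Aᵀ w with hv
  have h1 : ‖v‖ ^ 2 = ⟪mulVecE A v, w⟫ := by
    rw [inner_mulVecE, ← hv, real_inner_self_eq_norm_sq]
  have h2 : ⟪mulVecE A v, w⟫ ≤ ‖mulVecE A v‖ * ‖w‖ := real_inner_le_norm _ _
  have h3 := normA_le hPD hlam1 v
  rcases eq_or_lt_of_le (norm_nonneg v) with h | h
  · rw [← h]; positivity
  · have : ‖v‖ ^ 2 ≤ (Real.sqrt lam1 * ‖v‖) * ‖w‖ := by
      calc ‖v‖^2 = ⟪mulVecE A v, w⟫ := h1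
        _ ≤ ‖mulVecE A v‖ * ‖w‖ := h2
        _ ≤ (Real.sqrt lam1 * ‖v‖) * ‖w‖ := by
            exact mul_le_mul_of_nonneg_right h3 (norm_nonneg w)
    nlinarith

include hlam1 in
lemma normM_le (z : EuclideanSpace ℝ (Fin d)) :
    ‖mulVecE (Aᵀ * A) z‖ ≤ lam1 * ‖z‖ := by
  rw [mulVecE_mul]
  calc ‖mulVecE Aᵀ (mulVecE A z)‖ ≤ Real.sqrt lam1 * ‖mulVecE A z‖ := normAT_le hPD hlam1 _
    _ ≤ Real.sqrt lam1 * (Real.sqrt lam1 * ‖z‖) :=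
        mul_le_mul_of_nonneg_left (normA_le hPD hlam1 z) (Real.sqrt_nonneg _)
    _ = lam1 * ‖z‖ := by
        rw [← mul_assoc, Real.mul_self_sqrt (lam1_pos hPD hlam1).le]

include hlamd in
lemma normK_le (hlamdpos : 0 < lamd) (w : EuclideanSpace ℝ (Fin N)) :
    ‖mulVecE ((Aᵀ * A)⁻¹ * Aᵀ) w‖ ≤ Real.sqrt (1 / lamd) * ‖w‖ := by
  set u := mulVecE ((Aᵀ * A)⁻¹ * Aᵀ) w with hu
  have hinv : (Aᵀ * A) * (Aᵀ * A)⁻¹ = 1 :=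
    Matrix.mul_nonsing_inv _ (isUnit_iff_ne_zero.mpr hPD.det_pos.ne')
  have hMu : mulVecE (Aᵀ * A) u = mulVecE Aᵀ w := by
    rw [hu, ← mulVecE_mul, ← Matrix.mul_assoc, hinv, Matrix.one_mul]
  set q := ⟪u, mulVecE (Aᵀ * A) u⟫ with hq
  have hq1 : q = ⟪mulVecE A u, w⟫ := by
    rw [hq, hMu]; exact (inner_mulVecE A u w).symm
  have hAu : ‖mulVecE A u‖ ^ 2 = q := by
    rw [← real_inner_self_eq_norm_sq, inner_mulVecE, ← mulVecE_mul, hq]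
  have hq2 : q ≤ ‖mulVecE A u‖ * ‖w‖ := hq1 ▸ real_inner_le_norm _ _
  have hqw : q ≤ ‖w‖ ^ 2 := by nlinarith [norm_nonneg (mulVecE A u), norm_nonneg w]
  have hlow : lamd * ‖u‖ ^ 2 ≤ q := quad_lb hPD hlamd u
  have h5 : ‖u‖ ^ 2 ≤ (Real.sqrt (1 / lamd) * ‖w‖) ^ 2 := by
    rw [mul_pow, Real.sq_sqrt (by positivity : (0:ℝ) ≤ 1 / lamd)]
    rw [div_mul_eq_mul_div, one_mul, le_div_iff₀ hlamdpos]
    nlinarith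
  nlinarith [h5, norm_nonneg u, mul_nonneg (Real.sqrt_nonneg (1/lamd)) (norm_nonneg w)]

end Spec

lemma grad_zero {N d : ℕ} (A : Matrix (Fin N) (Fin d) ℝ) (b : EuclideanSpace ℝ (Fin N))
    (xstar : EuclideanSpace ℝ (Fin d))
    (hmin : ∀ y, (1 / 2) * ‖mulVecE A xstar - b‖ ^ 2 ≤ (1 / 2) * ‖mulVecE A y - b‖ ^ 2) :
    mulVecE Aᵀ (mulVecE A xstar - b) = 0 := by
  set r := mulVecE A xstar - b with hr
  set g := mulVecE Aᵀ r with hg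
  set k := ‖mulVecE A g‖ ^ 2 with hk
  set c := ‖g‖ ^ 2 with hc
  have hknn : 0 ≤ k := by positivity
  have hcnn : 0 ≤ c := by positivity
  have key : ∀ s : ℝ, 0 ≤ 2 * s * c + s ^ 2 * k := by
    intro s
    have h := hmin (xstar + s • g)
    have hAy : mulVecE A (xstar + s • g) - b = r + s • mulVecE A g := by
      rw [mulVecE_add, mulVecE_smul, hr]; abel
    rw [hAy, @norm_add_sq_real] at h
    have hinner : ⟪r, s • mulVecE A g⟫ = s * c := by
      rw [real_inner_smul_right, hc, ← real_inner_self_eq_norm_sq, hg,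
        real_inner_comm, inner_mulVecE]
    rw [hinner] at h
    have hs : (‖s • mulVecE A g‖) ^ 2 = s ^ 2 * k := by
      rw [norm_smul, mul_pow, Real.norm_eq_abs, sq_abs, hk]
    linarith [h, hs]
  have h2 := key (-(c / (k + 1)))
  have e : 2 * (-(c / (k + 1))) * c + (-(c / (k + 1))) ^ 2 * k
      = -(c ^ 2 * (k + 2)) / (k + 1) ^ 2 := by
    field_simp; ring
  rw [e] at h2
  have hpos : (0:ℝ) < (k + 1) ^ 2 := by positivity
  have hle : c ^ 2 * (k + 2) ≤ 0 := by
    by_contra hcon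
    push_neg at hcon
    have : -(c ^ 2 * (k + 2)) / (k + 1) ^ 2 < 0 := div_neg_of_neg_of_pos (by linarith) hpos
    linarith
  have hc0 : c = 0 := by nlinarith
  have hg0 : ‖g‖ ^ 2 = 0 := by rw [← hc, hc0]
  have : g = 0 := norm_eq_zero.mp (pow_eq_zero_iff two_ne_zero |>.mp hg0)
  simpa [hg] using this

end Aux

/-- Theorem 1 of the paper, equation (13). Robustness of the IPG
method against observation noise: one-step bound on the expected estimation error. -/
theorem ipg_observation_noise_expected_error_bound {N d : ℕ}
    (A : Matrix (Fin N) (Fin d) ℝ) (hPD : (Aᵀ * A).PosDef)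
    (lam1 lamd : ℝ)
    (hlam1 : IsGreatest (Set.range hPD.isHermitian.eigenvalues) lam1)
    (hlamd : IsLeast (Set.range hPD.isHermitian.eigenvalues) lamd)
    (hlamdpos : 0 < lamd)
    (b : EuclideanSpace ℝ (Fin N)) (xstar : EuclideanSpace ℝ (Fin d))
    (hmin : ∀ y, (1 / 2) * ‖mulVecE A xstar - b‖ ^ 2 ≤ (1 / 2) * ‖mulVecE A y - b‖ ^ 2)
    {Ω : Type} [MeasurableSpace Ω] (μ : Measure Ω) [IsProbabilityMeasure μ]
    (wb : Ω → EuclideanSpace ℝ (Fin N)) (ηm : ℝ)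
    (hwb_int : Integrable (fun o => ‖wb o‖) μ)
    (hwb : ∫ o, ‖wb o‖ ∂μ ≤ ηm)
    (δ : ℝ) (hδ0 : 0 < δ) (hδ1 : δ ≤ 1)
    (ρ : ℝ) (hρ0 : 0 ≤ ρ) (hρ1 : ρ < 1)
    (x : ℕ → Ω → EuclideanSpace ℝ (Fin d)) (K : ℕ → Matrix (Fin d) (Fin d) ℝ)
    (hrec : ∀ t o, x (t + 1) o =
      x t o - δ • mulVecE (K (t + 1)) (mulVecE Aᵀ (mulVecE A (x t o) - b - wb o)))
    (hdecay : ∀ t, specNorm (K t - (Aᵀ * A)⁻¹) ≤ ρ ^ t * frobNorm (K 0 - (Aᵀ * A)⁻¹))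
    (hint : ∀ t, Integrable (fun o => ‖x t o - xstar‖) μ) :
    ∀ t, (∫ o, ‖x (t + 1) o - xstar‖ ∂μ) ≤
      (1 - δ + δ * lam1 * frobNorm (K 0 - (Aᵀ * A)⁻¹) * ρ ^ (t + 1))
          * (∫ o, ‖x t o - xstar‖ ∂μ)
        + δ * ηm * Real.sqrt lam1 * frobNorm (K 0 - (Aᵀ * A)⁻¹) * ρ ^ (t + 1)
        + δ * ηm * Real.sqrt (1 / lamd) := by
  have hg0 : mulVecE Aᵀ (mulVecE A xstar - b) = 0 := grad_zero A b xstar hmin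
  have hinvmul : (Aᵀ * A)⁻¹ * (Aᵀ * A) = 1 :=
    Matrix.nonsing_inv_mul _ (isUnit_iff_ne_zero.mpr hPD.det_pos.ne')
  set F := frobNorm (K 0 - (Aᵀ * A)⁻¹) with hF
  have hFnn : 0 ≤ F := Real.sqrt_nonneg _
  have hl1 : 0 < lam1 := lam1_pos hPD hlam1
  intro t
  set E := K (t + 1) - (Aᵀ * A)⁻¹ with hE
  have hsE : specNorm E ≤ ρ ^ (t + 1) * F := hdecay (t + 1)
  have hsEnn : 0 ≤ specNorm E := norm_nonneg _
  set c1 := 1 - δ + δ * lam1 * F * ρ ^ (t + 1) with hc1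
  set c2 := δ * Real.sqrt lam1 * F * ρ ^ (t + 1) + δ * Real.sqrt (1 / lamd) with hc2
  have hρF : 0 ≤ ρ ^ (t + 1) * F := mul_nonneg (pow_nonneg hρ0 _) hFnn
  have hpt : ∀ o, ‖x (t + 1) o - xstar‖ ≤ c1 * ‖x t o - xstar‖ + c2 * ‖wb o‖ := by
    intro o
    set z := x t o - xstar with hz
    set w := wb o with hw
    have hkey : x (t + 1) o - xstar =
        (1 - δ) • z - δ • mulVecE E (mulVecE (Aᵀ * A) z)
          + δ • mulVecE E (mulVecE Aᵀ w) + δ • mulVecE ((Aᵀ * A)⁻¹ * Aᵀ) w := by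
      rw [hrec t o]
      have h1 : mulVecE A (x t o) - b - w = mulVecE A z + (mulVecE A xstar - b) - w := by
        rw [hz, mulVecE_sub]; abel
      rw [h1]
      have h2 : mulVecE Aᵀ (mulVecE A z + (mulVecE A xstar - b) - w)
          = mulVecE (Aᵀ * A) z - mulVecE Aᵀ w := by
        rw [mulVecE_sub, mulVecE_add, hg0, mulVecE_mul]; abel
      rw [h2]
      have hK : K (t + 1) = E + (Aᵀ * A)⁻¹ := by rw [hE]; abel
      have hsplit : ∀ V, mulVecE (K (t + 1)) V = mulVecE E V + mulVecE (Aᵀ * A)⁻¹ V :=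
        fun V => by rw [hK, mulVecE_matadd]
      have h5 : mulVecE (Aᵀ * A)⁻¹ (mulVecE (Aᵀ * A) z) = z := by
        rw [← mulVecE_mul, hinvmul, mulVecE_one]
      have h4 : mulVecE (Aᵀ * A)⁻¹ (mulVecE Aᵀ w) = mulVecE ((Aᵀ * A)⁻¹ * Aᵀ) w :=
        (mulVecE_mul _ _ _).symm
      rw [hsplit, mulVecE_sub E, mulVecE_sub ((Aᵀ * A)⁻¹), h5, h4, hz]
      module
    rw [hkey]
    have n1 : ‖(1 - δ) • z‖ = (1 - δ) * ‖z‖ := by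
      rw [norm_smul, Real.norm_eq_abs, abs_of_nonneg (by linarith)]
    have n2 : ‖δ • mulVecE E (mulVecE (Aᵀ * A) z)‖ ≤ δ * (ρ ^ (t + 1) * F * (lam1 * ‖z‖)) := by
      rw [norm_smul, Real.norm_eq_abs, abs_of_nonneg hδ0.le]
      refine mul_le_mul_of_nonneg_left ?_ hδ0.le
      calc ‖mulVecE E (mulVecE (Aᵀ * A) z)‖
          ≤ specNorm E * ‖mulVecE (Aᵀ * A) z‖ := mulVecE_le_specNorm _ _
        _ ≤ (ρ ^ (t + 1) * F) * (lam1 * ‖z‖) :=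
            mul_le_mul hsE (normM_le hPD hlam1 z) (norm_nonneg _) hρF
    have n3 : ‖δ • mulVecE E (mulVecE Aᵀ w)‖
        ≤ δ * (ρ ^ (t + 1) * F * (Real.sqrt lam1 * ‖w‖)) := by
      rw [norm_smul, Real.norm_eq_abs, abs_of_nonneg hδ0.le]
      refine mul_le_mul_of_nonneg_left ?_ hδ0.le
      calc ‖mulVecE E (mulVecE Aᵀ w)‖
          ≤ specNorm E * ‖mulVecE Aᵀ w‖ := mulVecE_le_specNorm _ _
        _ ≤ (ρ ^ (t + 1) * F) * (Real.sqrt lam1 * ‖w‖) :=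
            mul_le_mul hsE (normAT_le hPD hlam1 w) (norm_nonneg _) hρF
    have n4 : ‖δ • mulVecE ((Aᵀ * A)⁻¹ * Aᵀ) w‖ ≤ δ * (Real.sqrt (1 / lamd) * ‖w‖) := by
      rw [norm_smul, Real.norm_eq_abs, abs_of_nonneg hδ0.le]
      exact mul_le_mul_of_nonneg_left (normK_le hPD hlamd hlamdpos w) hδ0.le
    have tri : ‖(1 - δ) • z - δ • mulVecE E (mulVecE (Aᵀ * A) z)
          + δ • mulVecE E (mulVecE Aᵀ w) + δ • mulVecE ((Aᵀ * A)⁻¹ * Aᵀ) w‖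
        ≤ ‖(1 - δ) • z‖ + ‖δ • mulVecE E (mulVecE (Aᵀ * A) z)‖
          + ‖δ • mulVecE E (mulVecE Aᵀ w)‖ + ‖δ • mulVecE ((Aᵀ * A)⁻¹ * Aᵀ) w‖ := by
      calc _ ≤ ‖(1 - δ) • z - δ • mulVecE E (mulVecE (Aᵀ * A) z)
              + δ • mulVecE E (mulVecE Aᵀ w)‖ + ‖δ • mulVecE ((Aᵀ * A)⁻¹ * Aᵀ) w‖ :=
            norm_add_le _ _
        _ ≤ ‖(1 - δ) • z - δ • mulVecE E (mulVecE (Aᵀ * A) z)‖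
              + ‖δ • mulVecE E (mulVecE Aᵀ w)‖ + ‖δ • mulVecE ((Aᵀ * A)⁻¹ * Aᵀ) w‖ := by
            gcongr; exact norm_add_le _ _
        _ ≤ _ := by gcongr; exact norm_sub_le _ _
    calc _ ≤ _ := tri
      _ ≤ (1 - δ) * ‖z‖ + δ * (ρ ^ (t + 1) * F * (lam1 * ‖z‖))
          + δ * (ρ ^ (t + 1) * F * (Real.sqrt lam1 * ‖w‖))
          + δ * (Real.sqrt (1 / lamd) * ‖w‖) := by
        rw [n1]; gcongr
      _ = c1 * ‖z‖ + c2 * ‖w‖ := by rw [hc1, hc2]; ring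
  have hbint : Integrable (fun o => c1 * ‖x t o - xstar‖ + c2 * ‖wb o‖) μ :=
    ((hint t).const_mul c1).add (hwb_int.const_mul c2)
  have hI : (∫ o, ‖x (t + 1) o - xstar‖ ∂μ)
      ≤ ∫ o, c1 * ‖x t o - xstar‖ + c2 * ‖wb o‖ ∂μ :=
    integral_mono (hint (t + 1)) hbint hpt
  rw [integral_add ((hint t).const_mul c1) (hwb_int.const_mul c2),
    integral_const_mul, integral_const_mul] at hI
  have hc2nn : 0 ≤ c2 := by
    rw [hc2]
    have : 0 ≤ Real.sqrt lam1 := Real.sqrt_nonneg _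
    have : 0 ≤ Real.sqrt (1 / lamd) := Real.sqrt_nonneg _
    positivity
  have hmul : c2 * (∫ o, ‖wb o‖ ∂μ) ≤ c2 * ηm := mul_le_mul_of_nonneg_left hwb hc2nn
  calc (∫ o, ‖x (t + 1) o - xstar‖ ∂μ)
      ≤ c1 * (∫ o, ‖x t o - xstar‖ ∂μ) + c2 * (∫ o, ‖wb o‖ ∂μ) := hI
    _ ≤ c1 * (∫ o, ‖x t o - xstar‖ ∂μ) + c2 * ηm := by linarith
    _ = _ := by rw [hc1, hc2]; ring
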